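/- Let k be a complex number with Im k > 0 and let φ : ℝ → ℂ be bounded and continuous. Then lim_{x → 0+} ∫_{-∞}^{∞} G(x,y) φ(y) dy = φ(0); that is, G(x,·) is an approximate identity as x → 0+, so that G is the field of a unit point source at the origin. -/

import Mathlib

open MeasureTheory Filter

/-- The parabolic Green's function `G(x,y) = sqrt(k/(2πix)) · exp(i k y² / (2x))`,
where the square root is the principal branch of the complex square root. -/
noncomputable def parabolicG (k : ℂ) (x y : ℝ) : ℂ :=
  (k / (2 * (Real.pi : ℂ) * Complex.I * (x : ℂ))) ^ ((1 : ℂ) / 2) *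
    Complex.exp (Complex.I * k * (y : ℂ) ^ 2 / (2 * (x : ℂ)))

lemma ofReal_mul_cpow_half' {r : ℝ} (hr : 0 < r) {z : ℂ} (hz : z ≠ 0) :
    ((r : ℂ) * z) ^ ((1:ℂ)/2) = (Real.sqrt r : ℂ) * z ^ ((1:ℂ)/2) := by
  have hr' : (r : ℂ) ≠ 0 := Complex.ofReal_ne_zero.mpr hr.ne'
  have h1 : (Real.sqrt r : ℂ) = (r : ℂ) ^ ((1:ℂ)/2) := by
    rw [Real.sqrt_eq_rpow, Complex.ofReal_cpow hr.le]
    norm_num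
  rw [h1, Complex.cpow_def_of_ne_zero (mul_ne_zero hr' hz), Complex.log_ofReal_mul hr hz,
    add_mul, Complex.exp_add, ← Complex.cpow_def_of_ne_zero hz,
    Complex.cpow_def_of_ne_zero hr', Complex.ofReal_log hr.le]

/-- If `Im k > 0` and `φ : ℝ → ℂ` is bounded and continuous, then
`∫_{-∞}^{∞} G(x,y) φ(y) dy → φ(0)` as `x → 0+`: the parabolic Green's function is an
approximate identity, i.e. the field of a unit point source at the origin. -/
theorem parabolicG_approximate_identity (k : ℂ) (hk : 0 < k.im)
    (φ : ℝ → ℂ) (hφc : Continuous φ) (hφb : ∃ C : ℝ, ∀ y : ℝ, ‖φ y‖ ≤ C) :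
    Tendsto (fun x : ℝ => ∫ y : ℝ, parabolicG k x y * φ y)
      (nhdsWithin 0 (Set.Ioi 0)) (nhds (φ 0)) := by
  obtain ⟨C, hC⟩ := hφb
  have hkne : k ≠ 0 := fun h => by simp [h] at hk
  set z : ℂ := k / (2 * (Real.pi : ℂ) * Complex.I) with hz
  have h2piI : (2 * (Real.pi : ℂ) * Complex.I) ≠ 0 :=
    mul_ne_zero (mul_ne_zero two_ne_zero (Complex.ofReal_ne_zero.mpr Real.pi_ne_zero))
      Complex.I_ne_zero
  have hzne : z ≠ 0 := div_ne_zero hkne h2piI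
  have hzre : 0 < z.re := by
    rw [hz, Complex.div_re]
    simp [Complex.normSq, Real.pi_ne_zero]
    positivity
  have hzarg : z.arg ≠ Real.pi := by
    intro h
    have := (Complex.arg_eq_pi_iff.mp h).1
    linarith
  set A : ℂ := z ^ ((1:ℂ)/2) with hA
  have hAne : A ≠ 0 := by
    rw [hA, Ne, Complex.cpow_eq_zero_iff]
    simp [hzne]
  -- real part of the exponent
  have hre : ∀ u : ℝ, (Complex.I * k * (u:ℂ)^2 / 2).re = -(k.im/2) * u^2 := by
    intro u
    simp [Complex.div_re, Complex.mul_re, Complex.mul_im, Complex.normSq, ← Complex.ofReal_pow]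
    ring
  -- Gaussian integral
  have hbre : (0:ℝ) < (-(Complex.I * k)/2).re := by
    simp [Complex.div_re, Complex.mul_re, Complex.normSq]
    positivity
  have hgauss : ∫ u : ℝ, Complex.exp (Complex.I * k * (u:ℂ)^2 / 2) = A⁻¹ := by
    have h1 : ∀ u : ℝ, Complex.exp (Complex.I * k * (u:ℂ)^2 / 2)
        = Complex.exp (-(-(Complex.I * k)/2) * (u:ℂ)^2) := by
      intro u; congr 1; ring
    have h2 : (∫ u : ℝ, Complex.exp (-(-(Complex.I * k)/2) * (u:ℂ)^2))
        = ((Real.pi : ℂ) / (-(Complex.I * k)/2)) ^ (1/2 : ℂ) := integral_gaussian_complex hbre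
    have hπb : (Real.pi : ℂ) / (-(Complex.I * k)/2) = z⁻¹ := by
      rw [hz, inv_div, div_eq_div_iff (by simpa using hkne) hkne]
      ring_nf
      try rw [Complex.I_sq]
      try ring
    simp_rw [h1, h2, hπb, Complex.inv_cpow _ _ hzarg]
    rw [hA]
  -- change of variables
  have hcv : ∀ x : ℝ, 0 < x → (∫ y : ℝ, parabolicG k x y * φ y)
      = A * ∫ u : ℝ, Complex.exp (Complex.I * k * (u:ℂ)^2 / 2) * φ (Real.sqrt x * u) := by
    intro x hx
    have hs : 0 < Real.sqrt x := Real.sqrt_pos.2 hx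
    have step1 : (∫ y : ℝ, parabolicG k x y * φ y)
        = Real.sqrt x • ∫ u : ℝ, parabolicG k x (Real.sqrt x * u) * φ (Real.sqrt x * u) := by
      rw [Measure.integral_comp_mul_left (fun y => parabolicG k x y * φ y) (Real.sqrt x),
        abs_of_pos (inv_pos.2 hs), smul_smul, mul_inv_cancel₀ hs.ne', one_smul]
    have hpt : ∀ u : ℝ, parabolicG k x (Real.sqrt x * u) * φ (Real.sqrt x * u)
        = ((Real.sqrt x⁻¹ : ℝ) : ℂ) * A
            * (Complex.exp (Complex.I * k * (u:ℂ)^2 / 2) * φ (Real.sqrt x * u)) := by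
      intro u
      have h1 : k / (2 * (Real.pi : ℂ) * Complex.I * (x:ℂ)) = ((x⁻¹ : ℝ) : ℂ) * z := by
        rw [hz]
        push_cast
        field_simp
      have h2 : Complex.I * k * ((Real.sqrt x * u : ℝ):ℂ)^2 / (2*(x:ℂ))
          = Complex.I * k * (u:ℂ)^2 / 2 := by
        have hs2 : ((Real.sqrt x : ℝ) : ℂ)^2 = (x:ℂ) := by
          rw [← Complex.ofReal_pow, Real.sq_sqrt hx.le]
        push_cast
        rw [mul_pow, hs2]
        have hxne : (x:ℂ) ≠ 0 := Complex.ofReal_ne_zero.mpr hx.ne'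
        field_simp
      rw [parabolicG, h1, h2, ofReal_mul_cpow_half' (inv_pos.2 hx) hzne, ← hA]
      ring
    rw [step1]
    simp_rw [hpt]
    rw [integral_const_mul, Complex.real_smul, Real.sqrt_inv]
    have hsa : ((Real.sqrt x : ℝ):ℂ) ≠ 0 := Complex.ofReal_ne_zero.mpr hs.ne'
    push_cast
    field_simp
  -- dominated convergence
  have hdct : Tendsto
      (fun x : ℝ => ∫ u : ℝ, Complex.exp (Complex.I * k * (u:ℂ)^2 / 2) * φ (Real.sqrt x * u))
      (nhdsWithin 0 (Set.Ioi 0))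
      (nhds (∫ u : ℝ, Complex.exp (Complex.I * k * (u:ℂ)^2 / 2) * φ 0)) := by
    apply tendsto_integral_filter_of_dominated_convergence
      (bound := fun u : ℝ => C * Real.exp (-(k.im/2) * u^2))
    · refine Eventually.of_forall fun x => Continuous.aestronglyMeasurable ?_
      exact (Complex.continuous_exp.comp
        (((continuous_const.mul ((Complex.continuous_ofReal).pow 2))).div_const 2)).mul
        (hφc.comp (continuous_const.mul continuous_id))
    · refine Eventually.of_forall fun x => ae_of_all _ fun u => ?_
      rw [norm_mul, Complex.norm_exp, hre u]
      calc Real.exp (-(k.im/2) * u^2) * ‖φ (Real.sqrt x * u)‖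
          ≤ Real.exp (-(k.im/2) * u^2) * C :=
            mul_le_mul_of_nonneg_left (hC _) (Real.exp_pos _).le
        _ = C * Real.exp (-(k.im/2) * u^2) := mul_comm _ _
    · exact (integrable_exp_neg_mul_sq (by positivity : (0:ℝ) < k.im/2)).const_mul C
    · refine ae_of_all _ fun u => ?_
      have h1 : Tendsto (fun x : ℝ => Real.sqrt x * u) (nhdsWithin 0 (Set.Ioi 0)) (nhds 0) := by
        have h2 : Tendsto (fun x : ℝ => Real.sqrt x * u) (nhds 0) (nhds (Real.sqrt 0 * u)) :=
          (Real.continuous_sqrt.tendsto 0).mul_const u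
        simpa using h2.mono_left nhdsWithin_le_nhds
      exact ((hφc.tendsto 0).comp h1).const_mul _
  -- conclusion
  have hfinal : A * (∫ u : ℝ, Complex.exp (Complex.I * k * (u:ℂ)^2 / 2) * φ 0) = φ 0 := by
    rw [integral_mul_const, hgauss, ← mul_assoc, mul_inv_cancel₀ hAne, one_mul]
  have := (hdct.const_mul A).congr'
    (by filter_upwards [self_mem_nhdsWithin] with x hx using (hcv x hx).symm)
  rwa [hfinal] at this
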